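/- Define φ₀ : (0,1) → ℝ by φ₀(x) = (44/31)^{5/6} · x^{1/6} (1−x)^{1/3} (−11/4 + 9x/4) / (−35/12 + 11x/4). Then the equation φ₀(x) = 1 has at least 4 solutions in the open interval (0,1). -/
import Mathlib

noncomputable def φ₀ (x : ℝ) : ℝ :=
  (44 / 31 : ℝ) ^ (5 / 6 : ℝ) * x ^ (1 / 6 : ℝ) * (1 - x) ^ (1 / 3 : ℝ) *
    (-11 / 4 + 9 * x / 4) / (-35 / 12 + 11 * x / 4)

noncomputable def g (x : ℝ) : ℝ :=
  (44 / 31 : ℝ) ^ (5 : ℕ) * x * (1 - x) ^ (2 : ℕ) * (-11 / 4 + 9 * x / 4) ^ (6 : ℕ)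
    - (-35 / 12 + 11 * x / 4) ^ (6 : ℕ)

lemma g_cont : Continuous g := by unfold g; continuity

lemma phi_eq_one {y : ℝ} (hy : y ∈ Set.Ioo (0 : ℝ) 1) (hg : g y = 0) : φ₀ y = 1 := by
  obtain ⟨hy0, hy1⟩ := hy
  have hB : (-35 / 12 + 11 * y / 4 : ℝ) < 0 := by nlinarith
  have hBne : (-35 / 12 + 11 * y / 4 : ℝ) ≠ 0 := ne_of_lt hB
  have hA : (-11 / 4 + 9 * y / 4 : ℝ) < 0 := by nlinarith
  have hC : ((44 / 31 : ℝ) ^ (5 / 6 : ℝ)) ^ (6 : ℕ) = (44 / 31 : ℝ) ^ (5 : ℕ) := by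
    rw [← Real.rpow_natCast ((44 / 31 : ℝ) ^ (5 / 6 : ℝ)) 6,
      ← Real.rpow_mul (by norm_num)]
    norm_num
  have hX : (y ^ (1 / 6 : ℝ)) ^ (6 : ℕ) = y := by
    rw [← Real.rpow_natCast (y ^ (1 / 6 : ℝ)) 6, ← Real.rpow_mul hy0.le]
    norm_num
  have hY : ((1 - y) ^ (1 / 3 : ℝ)) ^ (6 : ℕ) = (1 - y) ^ (2 : ℕ) := by
    rw [← Real.rpow_natCast ((1 - y) ^ (1 / 3 : ℝ)) 6, ← Real.rpow_mul (by linarith)]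
    norm_num
  have hpow : φ₀ y ^ (6 : ℕ) = 1 := by
    unfold φ₀
    rw [div_pow, mul_pow, mul_pow, mul_pow, hC, hX, hY]
    have hP : (44 / 31 : ℝ) ^ (5 : ℕ) * y * (1 - y) ^ (2 : ℕ) *
        (-11 / 4 + 9 * y / 4) ^ (6 : ℕ) = (-35 / 12 + 11 * y / 4) ^ (6 : ℕ) := by
      have := hg; unfold g at this; linarith
    rw [hP]
    exact div_self (pow_ne_zero _ hBne)
  have hnn : 0 ≤ φ₀ y := by
    unfold φ₀
    apply div_nonneg_of_nonpos _ hB.le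
    have h1 : (0 : ℝ) ≤ (44 / 31 : ℝ) ^ (5 / 6 : ℝ) := Real.rpow_nonneg (by norm_num) _
    have h2 : (0 : ℝ) ≤ y ^ (1 / 6 : ℝ) := Real.rpow_nonneg hy0.le _
    have h3 : (0 : ℝ) ≤ (1 - y) ^ (1 / 3 : ℝ) := Real.rpow_nonneg (by linarith) _
    nlinarith [mul_nonneg (mul_nonneg h1 h2) h3]
  rcases lt_trichotomy (φ₀ y) 1 with h | h | h
  · exfalso
    have := pow_lt_one₀ hnn h (n := 6) (by norm_num)
    rw [hpow] at this; exact lt_irrefl _ this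
  · exact h
  · exfalso
    have := one_lt_pow₀ h (n := 6) (by norm_num)
    rw [hpow] at this; exact lt_irrefl _ this

lemma exists_root {a b : ℝ} (hab : a < b) (hga : g a < 0) (hgb : 0 < g b) :
    ∃ y ∈ Set.Ioo a b, g y = 0 := by
  have := intermediate_value_Ioo hab.le g_cont.continuousOn
  have h0 : (0 : ℝ) ∈ Set.Ioo (g a) (g b) := ⟨hga, hgb⟩
  obtain ⟨y, hy, hgy⟩ := this h0
  exact ⟨y, hy, hgy⟩

lemma exists_root' {a b : ℝ} (hab : a < b) (hga : 0 < g a) (hgb : g b < 0) :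
    ∃ y ∈ Set.Ioo a b, g y = 0 := by
  have := intermediate_value_Ioo' hab.le g_cont.continuousOn
  have h0 : (0 : ℝ) ∈ Set.Ioo (g b) (g a) := ⟨hgb, hga⟩
  obtain ⟨y, hy, hgy⟩ := this h0
  exact ⟨y, hy, hgy⟩

theorem phi0_eq_one_has_four_solutions :
    ∃ x1 x2 x3 x4 : ℝ, x1 ∈ Set.Ioo (0 : ℝ) 1 ∧ x2 ∈ Set.Ioo (0 : ℝ) 1 ∧
      x3 ∈ Set.Ioo (0 : ℝ) 1 ∧ x4 ∈ Set.Ioo (0 : ℝ) 1 ∧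
      x1 < x2 ∧ x2 < x3 ∧ x3 < x4 ∧
      φ₀ x1 = 1 ∧ φ₀ x2 = 1 ∧ φ₀ x3 = 1 ∧ φ₀ x4 = 1 := by
  have h1 : g (1 / 2) < 0 := by unfold g; norm_num
  have h2 : 0 < g (3 / 5) := by unfold g; norm_num
  have h3 : g (39 / 50) < 0 := by unfold g; norm_num
  have h4 : 0 < g (9 / 10) := by unfold g; norm_num
  have h5 : g (19 / 20) < 0 := by unfold g; norm_num
  obtain ⟨y1, hy1, hg1⟩ := exists_root (by norm_num : (1/2:ℝ) < 3/5) h1 h2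
  obtain ⟨y2, hy2, hg2⟩ := exists_root' (by norm_num : (3/5:ℝ) < 39/50) h2 h3
  obtain ⟨y3, hy3, hg3⟩ := exists_root (by norm_num : (39/50:ℝ) < 9/10) h3 h4
  obtain ⟨y4, hy4, hg4⟩ := exists_root' (by norm_num : (9/10:ℝ) < 19/20) h4 h5
  have m1 : y1 ∈ Set.Ioo (0:ℝ) 1 := ⟨by linarith [hy1.1], by linarith [hy1.2]⟩
  have m2 : y2 ∈ Set.Ioo (0:ℝ) 1 := ⟨by linarith [hy2.1], by linarith [hy2.2]⟩
  have m3 : y3 ∈ Set.Ioo (0:ℝ) 1 := ⟨by linarith [hy3.1], by linarith [hy3.2]⟩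
  have m4 : y4 ∈ Set.Ioo (0:ℝ) 1 := ⟨by linarith [hy4.1], by linarith [hy4.2]⟩
  exact ⟨y1, y2, y3, y4, m1, m2, m3, m4,
    by linarith [hy1.2, hy2.1], by linarith [hy2.2, hy3.1], by linarith [hy3.2, hy4.1],
    phi_eq_one m1 hg1, phi_eq_one m2 hg2, phi_eq_one m3 hg3, phi_eq_one m4 hg4⟩
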